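/- Let E : M → ℝ be a convex pre-expectation on a linear subspace M ∋ 1 of L^∞(Ω,F). Then E is continuous from above (E(Xₙ) ↓ E(X) whenever Xₙ ↓ X pointwise in M) if and only if every linear functional μ ∈ M' with E*(μ) < ∞ is continuous from above. -/

import Mathlib

open Set Filter

def IsLinfty {Ω : Type*} [MeasurableSpace Ω] (X : Ω → ℝ) : Prop :=
  Measurable X ∧ ∃ C : ℝ, ∀ ω, |X ω| ≤ C

section Subgrad
variable {V : Type*} [AddCommGroup V] [Module ℝ V]

/-- Every convex real-valued function on a real vector space has a subgradient at
every point (purely algebraic Hahn–Banach). -/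
theorem exists_subgradient' (F : V → ℝ)
    (hF : ∀ Y Z : V, ∀ t ∈ Icc (0:ℝ) 1, F (t • Y + (1-t) • Z) ≤ t * F Y + (1-t) * F Z)
    (a : V) : ∃ μ : V →ₗ[ℝ] ℝ, ∀ Y : V, μ Y - F Y ≤ μ a - F a := by
  set q : V → ℝ → ℝ := fun v t => (F (a + t • v) - F a) / t with hq
  have qmono : ∀ v : V, ∀ s t : ℝ, 0 < s → s ≤ t → q v s ≤ q v t := by
    intro v s t hs hst
    have ht : 0 < t := hs.trans_le hst
    have h1 : (s/t) • (a + t • v) + (1 - s/t) • a = a + s • v := by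
      rw [smul_add, smul_smul, div_mul_cancel₀ _ ht.ne']
      module
    have h2 := hF (a + t • v) a (s/t) ⟨by positivity, by
      rw [div_le_one ht]; exact hst⟩
    rw [h1] at h2
    have h2' : F (a + s • v) - F a ≤ (s/t) * (F (a + t • v) - F a) := by
      ring_nf; ring_nf at h2; linarith
    rw [hq, div_le_div_iff₀ hs ht]
    calc (F (a + s • v) - F a) * t ≤ ((s/t) * (F (a + t • v) - F a)) * t :=
          mul_le_mul_of_nonneg_right h2' ht.le
      _ = (F (a + t • v) - F a) * s := by field_simp
  have qlb : ∀ v : V, ∀ t : ℝ, 0 < t → F a - F (a - v) ≤ q v t := by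
    intro v t ht
    have hθ : (0:ℝ) < 1 + t := by linarith
    have e1 : (1 : ℝ) - t/(1+t) = 1/(1+t) := by field_simp; ring
    have h1 : (t/(1+t)) • (a - v) + (1 - t/(1+t)) • (a + t • v) = a := by
      rw [e1]
      match_scalars <;> field_simp <;> ring
    have h2 := hF (a - v) (a + t • v) (t/(1+t)) ⟨by positivity, by
      rw [div_le_one hθ]; linarith⟩
    rw [h1, e1] at h2
    rw [hq, le_div_iff₀ ht]
    have h3 : (1+t) * F a ≤ t * F (a-v) + F (a + t•v) := by
      have := mul_le_mul_of_nonneg_left h2 hθ.le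
      calc (1+t) * F a ≤ (1+t) * (t / (1 + t) * F (a - v) + 1 / (1 + t) * F (a + t • v)) := this
        _ = t * F (a-v) + F (a + t•v) := by field_simp
    nlinarith
  set S : V → Set ℝ := fun v => q v '' Ioi 0 with hS
  have hSne : ∀ v, (S v).Nonempty := fun v => ⟨q v 1, ⟨1, mem_Ioi.2 one_pos, rfl⟩⟩
  have hSbdd : ∀ v, BddBelow (S v) := by
    intro v
    exact ⟨F a - F (a - v), by rintro x ⟨t, ht, rfl⟩; exact qlb v t ht⟩
  set N : V → ℝ := fun v => sInf (S v) with hN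
  have hNle : ∀ v t, 0 < t → N v ≤ q v t := fun v t ht => csInf_le (hSbdd v) ⟨t, ht, rfl⟩
  have hNge : ∀ v (b : ℝ), (∀ t, 0 < t → b ≤ q v t) → b ≤ N v := by
    intro v b hb
    exact le_csInf (hSne v) (by rintro x ⟨t, ht, rfl⟩; exact hb t ht)
  have N_hom : ∀ c : ℝ, 0 < c → ∀ v, N (c • v) = c * N v := by
    intro c hc v
    apply le_antisymm
    · have h1 : ∀ t, 0 < t → N (c • v) / c ≤ q v t := by
        intro t ht
        have hsv : (t/c) • (c • v) = t • v := by
          rw [smul_smul, div_mul_cancel₀ _ hc.ne']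
        have hqq : q (c • v) (t / c) = c * q v t := by
          rw [hq]; simp only [hsv]
          rw [div_div_eq_mul_div]; ring
        have h2 := hNle (c • v) (t / c) (by positivity)
        rw [hqq] at h2
        rw [div_le_iff₀ hc]
        linarith
      have := hNge v _ h1
      rw [div_le_iff₀ hc] at this
      linarith
    · apply hNge
      intro t ht
      have hsv : t • (c • v) = (c*t) • v := by rw [smul_smul, mul_comm]
      have hqq : q (c • v) t = c * q v (c*t) := by
        rw [hq]; simp only [hsv]
        field_simp
      rw [hqq]
      have := hNle v (c*t) (by positivity)
      nlinarith
  have N_add : ∀ v w, N (v + w) ≤ N v + N w := by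
    intro v w
    have key : ∀ t, 0 < t → N (v + w) ≤ q v (2*t) + q w (2*t) := by
      intro t ht
      have h1 : (1/2 : ℝ) • (a + (2*t) • v) + (1 - 1/2 : ℝ) • (a + (2*t) • w)
          = a + t • (v + w) := by
        norm_num
        match_scalars <;> field_simp <;> ring
      have h2 := hF (a + (2*t) • v) (a + (2*t) • w) (1/2) ⟨by norm_num, by norm_num⟩
      rw [h1] at h2
      have h3 : q (v+w) t ≤ q v (2*t) + q w (2*t) := by
        rw [hq]
        rw [div_add_div _ _ (by positivity : (2*t:ℝ) ≠ 0) (by positivity : (2*t:ℝ) ≠ 0)]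
        rw [div_le_div_iff₀ ht (by positivity)]
        nlinarith
      exact (hNle _ t ht).trans h3
    have hε : ∀ ε : ℝ, 0 < ε → N (v + w) ≤ N v + N w + 2*ε := by
      intro ε hε
      obtain ⟨x1, ⟨t1, ht1, rfl⟩, hx1⟩ := exists_lt_of_csInf_lt (hSne v)
        (show N v < N v + ε by linarith)
      obtain ⟨x2, ⟨t2, ht2, rfl⟩, hx2⟩ := exists_lt_of_csInf_lt (hSne w)
        (show N w < N w + ε by linarith)
      set t := min t1 t2 with htdef
      have ht : 0 < t := lt_min ht1 ht2
      have hk := key (t/2) (by positivity)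
      have e : 2 * (t/2) = t := by ring
      rw [e] at hk
      have m1 : q v t ≤ q v t1 := qmono v t t1 ht (min_le_left _ _)
      have m2 : q w t ≤ q w t2 := qmono w t t2 ht (min_le_right _ _)
      linarith
    by_contra h
    push_neg at h
    have := hε ((N (v+w) - (N v + N w))/4) (by linarith)
    linarith
  have hN0 : N 0 = 0 := by
    apply le_antisymm
    · have := hNle 0 1 one_pos
      simpa [hq] using this
    · apply hNge
      intro t ht
      simp [hq]
  obtain ⟨g, -, hg⟩ := exists_extension_of_le_sublinear
    (LinearMap.toPMap (0 : V →ₗ[ℝ] ℝ) ⊥) N N_hom N_add (by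
      rintro ⟨x, hx⟩
      have hx0 : x = 0 := by simpa using hx
      subst hx0
      simp [LinearMap.toPMap_apply, hN0])
  refine ⟨g, fun Y => ?_⟩
  have h1 : g (Y - a) ≤ N (Y - a) := hg _
  have h2 : N (Y - a) ≤ q (Y - a) 1 := hNle _ 1 one_pos
  have h3 : q (Y - a) 1 = F Y - F a := by
    rw [hq]; simp
  have h4 : g (Y - a) = g Y - g a := by rw [map_sub]
  linarith

end Subgrad

set_option maxHeartbeats 1000000 in
theorem stmt10 {Ω : Type*} [MeasurableSpace Ω]
    (M : Submodule ℝ (Ω → ℝ)) (hM : ∀ X ∈ M, IsLinfty X)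
    (hone : (fun _ : Ω => (1:ℝ)) ∈ M)
    (E : (Ω → ℝ) → ℝ)
    (hmono : ∀ X ∈ M, ∀ Y ∈ M, (∀ ω, X ω ≤ Y ω) → E X ≤ E Y)
    (hcp : ∀ c : ℝ, E (fun _ : Ω => c) = c)
    (hconvex : ∀ X ∈ M, ∀ Y ∈ M, ∀ t ∈ Icc (0:ℝ) 1,
      E (fun ω => t * X ω + (1 - t) * Y ω) ≤ t * E X + (1 - t) * E Y) :
    -- `E` is continuous from above on `M` ...
    (∀ (Xn : ℕ → M) (X : M), (∀ ω, Antitone fun n => (Xn n : Ω → ℝ) ω) →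
      (∀ ω, Tendsto (fun n => (Xn n : Ω → ℝ) ω) atTop (nhds ((X : Ω → ℝ) ω))) →
      Tendsto (fun n => E (Xn n : Ω → ℝ)) atTop (nhds (E (X : Ω → ℝ)))) ↔
    -- ... iff every `μ ∈ M'` with `E*(μ) < ∞` is continuous from above
    (∀ μ : M →ₗ[ℝ] ℝ, (∃ c : ℝ, ∀ X : M, μ X - E (X : Ω → ℝ) ≤ c) →
      ∀ (Xn : ℕ → M) (X : M), (∀ ω, Antitone fun n => (Xn n : Ω → ℝ) ω) →
        (∀ ω, Tendsto (fun n => (Xn n : Ω → ℝ) ω) atTop (nhds ((X : Ω → ℝ) ω))) →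
        Tendsto (fun n => μ (Xn n)) atTop (nhds (μ X))) := by
  have hE0 : E ((0 : M) : Ω → ℝ) = 0 := by
    have e : ((0 : M) : Ω → ℝ) = fun _ => (0:ℝ) := by funext ω; simp
    rw [e, hcp]
  have hpos : ∀ (ν : M →ₗ[ℝ] ℝ) (c : ℝ), (∀ Y : M, ν Y - E (Y : Ω → ℝ) ≤ c) →
      ∀ Z : M, (∀ ω, 0 ≤ (Z : Ω → ℝ) ω) → 0 ≤ ν Z := by
    intro ν c hc Z hZ
    have hc0 : 0 ≤ c := by
      have := hc 0
      rw [hE0] at this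
      simpa using this
    by_contra h
    push_neg at h
    set lam : ℝ := (c+1)/(-ν Z) with hlam
    have hlampos : 0 < lam := div_pos (by linarith) (by linarith)
    have h1 := hc (-(lam • Z))
    have h2 : E ((-(lam • Z) : M) : Ω → ℝ) ≤ E ((0 : M) : Ω → ℝ) := by
      apply hmono _ (Submodule.neg_mem _ (Submodule.smul_mem _ _ Z.2)) _ (Submodule.zero_mem _)
      intro ω
      have := hZ ω
      simp only [Submodule.coe_neg, Submodule.coe_smul, Pi.neg_apply, Pi.smul_apply,
        smul_eq_mul, ZeroMemClass.coe_zero, Pi.zero_apply]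
      nlinarith
    rw [hE0] at h2
    have h3 : ν (-(lam • Z)) = -(lam * ν Z) := by simp [map_neg, map_smul]
    rw [h3] at h1
    have hne : -ν Z ≠ 0 := ne_of_gt (by linarith)
    have h4 : -(lam * ν Z) = c + 1 := by
      rw [hlam, neg_mul_eq_mul_neg, div_mul_cancel₀ _ hne]
    nlinarith [h1, h2]
  have hXle : ∀ (Xn : ℕ → M) (X : M), (∀ ω, Antitone fun n => (Xn n : Ω → ℝ) ω) →
      (∀ ω, Tendsto (fun n => (Xn n : Ω → ℝ) ω) atTop (nhds ((X : Ω → ℝ) ω))) →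
      ∀ n ω, (X : Ω → ℝ) ω ≤ (Xn n : Ω → ℝ) ω := by
    intro Xn X hanti hlim n ω
    exact le_of_tendsto (hlim ω) (eventually_atTop.2 ⟨n, fun m hm => hanti ω hm⟩)
  constructor
  · -- E continuous from above → each μ is
    rintro hE μ ⟨c, hc⟩ Xn X hanti hlim
    set Y : ℕ → M := fun n => Xn n - X with hY
    have hY0 : ∀ n ω, 0 ≤ (Y n : Ω → ℝ) ω := by
      intro n ω
      simp only [hY, Submodule.coe_sub, Pi.sub_apply, sub_nonneg]
      exact hXle Xn X hanti hlim n ω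
    have hμY0 : ∀ n, 0 ≤ μ (Y n) := fun n => hpos μ c hc (Y n) (hY0 n)
    have hμanti : Antitone fun n => μ (Y n) := by
      intro n m hnm
      have hd : ∀ ω, 0 ≤ ((Y n - Y m : M) : Ω → ℝ) ω := by
        intro ω
        simp only [hY, Submodule.coe_sub, Pi.sub_apply]
        have := hanti ω hnm
        simp only at this
        linarith
      have := hpos μ c hc (Y n - Y m) hd
      rw [map_sub] at this
      linarith
    have hbdd : BddBelow (range fun n => μ (Y n)) :=
      ⟨0, by rintro x ⟨n, rfl⟩; exact hμY0 n⟩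
    have htend : Tendsto (fun n => μ (Y n)) atTop (nhds (⨅ n, μ (Y n))) :=
      tendsto_atTop_ciInf hμanti hbdd
    set L := ⨅ n, μ (Y n) with hLdef
    have hL0 : 0 ≤ L := le_ciInf hμY0
    have hLle : ∀ lam : ℝ, 0 < lam → lam * L ≤ c := by
      intro lam hlam
      have hEt : Tendsto (fun n => E ((lam • Y n : M) : Ω → ℝ)) atTop (nhds 0) := by
        have h1 : ∀ ω, Antitone fun n => ((lam • Y n : M) : Ω → ℝ) ω := by
          intro ω n m hnm
          simp only [Submodule.coe_smul, Pi.smul_apply, smul_eq_mul]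
          have h1 := hanti ω hnm
          simp only [hY, Submodule.coe_sub, Pi.sub_apply]
          simp only at h1
          nlinarith
        have h2 : ∀ ω, Tendsto (fun n => ((lam • Y n : M) : Ω → ℝ) ω) atTop
            (nhds (((0 : M) : Ω → ℝ) ω)) := by
          intro ω
          have ht : Tendsto (fun n => lam * ((Xn n : Ω → ℝ) ω - (X : Ω → ℝ) ω)) atTop
              (nhds (lam * ((X : Ω → ℝ) ω - (X : Ω → ℝ) ω))) :=
            ((hlim ω).sub_const _).const_mul lam
          simp only [sub_self, mul_zero] at ht
          have e0 : ((0 : M) : Ω → ℝ) ω = 0 := by simp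
          rw [e0]
          have e : (fun n => ((lam • Y n : M) : Ω → ℝ) ω)
              = fun n => lam * ((Xn n : Ω → ℝ) ω - (X : Ω → ℝ) ω) := by
            funext n; simp [hY]
          rw [e]
          exact ht
        have := hE (fun n => lam • Y n) 0 h1 h2
        rwa [hE0] at this
      have hle : ∀ n, lam * μ (Y n) ≤ E ((lam • Y n : M) : Ω → ℝ) + c := by
        intro n
        have := hc (lam • Y n)
        rw [map_smul] at this
        simp only [smul_eq_mul] at this
        linarith
      have h1 : Tendsto (fun n => lam * μ (Y n)) atTop (nhds (lam * L)) :=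
        htend.const_mul lam
      have h2 : Tendsto (fun n => E ((lam • Y n : M) : Ω → ℝ) + c) atTop (nhds (0 + c)) :=
        hEt.add_const c
      have := le_of_tendsto_of_tendsto' h1 h2 hle
      linarith
    have hc0 : 0 ≤ c := by
      have := hc 0
      rw [hE0] at this
      simpa using this
    have hL : L = 0 := by
      refine le_antisymm ?_ hL0
      by_contra h
      push_neg at h
      have := hLle ((c+1)/L) (by positivity)
      rw [div_mul_cancel₀ _ (by linarith : L ≠ 0)] at this
      linarith
    have hfin : Tendsto (fun n => μ (Y n) + μ X) atTop (nhds (L + μ X)) :=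
      htend.add_const _
    rw [hL, zero_add] at hfin
    convert hfin using 2 with n
    simp [hY, map_sub]
  · -- each μ continuous from above → E is
    intro hμ Xn X hanti hlim
    have hXleX : ∀ n ω, (X : Ω → ℝ) ω ≤ (Xn n : Ω → ℝ) ω := hXle Xn X hanti hlim
    obtain ⟨-, C0, hC0⟩ := hM _ (Xn 0).2
    have hup : ∀ n ω, (Xn n : Ω → ℝ) ω ≤ C0 := by
      intro n ω
      calc (Xn n : Ω → ℝ) ω ≤ (Xn 0 : Ω → ℝ) ω := hanti ω (Nat.zero_le n)
        _ ≤ C0 := le_of_abs_le (hC0 ω)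
    set one : M := ⟨fun _ => 1, hone⟩ with hone'
    have hconst : ∀ r : ℝ, E ((r • one : M) : Ω → ℝ) = r := by
      intro r
      have e : ((r • one : M) : Ω → ℝ) = fun _ => r := by
        funext ω; simp [hone']
      rw [e, hcp]
    have hFconv : ∀ (Y Z : M), ∀ t ∈ Icc (0:ℝ) 1,
        E (((t • Y + (1-t) • Z : M)) : Ω → ℝ)
          ≤ t * E (Y : Ω → ℝ) + (1-t) * E (Z : Ω → ℝ) := by
      intro Y Z t ht
      have e : ((t • Y + (1-t) • Z : M) : Ω → ℝ)
          = fun ω => t * (Y : Ω → ℝ) ω + (1-t) * (Z : Ω → ℝ) ω := by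
        funext ω; simp
      rw [e]
      exact hconvex _ Y.2 _ Z.2 t ht
    have hex : ∀ n, ∃ ν : M →ₗ[ℝ] ℝ, ∀ Y : M,
        ν Y - E (Y : Ω → ℝ) ≤ ν (Xn n) - E ((Xn n : M) : Ω → ℝ) :=
      fun n => exists_subgradient' (fun Y : M => E (Y : Ω → ℝ)) hFconv (Xn n)
    choose μn hsub using hex
    set cn : ℕ → ℝ := fun n => μn n (Xn n) - E ((Xn n : M) : Ω → ℝ) with hcn
    have hsubc : ∀ n (Y : M), μn n Y - E (Y : Ω → ℝ) ≤ cn n := hsub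
    have hposn : ∀ n (Z : M), (∀ ω, 0 ≤ (Z : Ω → ℝ) ω) → 0 ≤ μn n Z :=
      fun n => hpos (μn n) (cn n) (hsubc n)
    have hone1 : ∀ n, μn n one = 1 := by
      intro n
      have key : ∀ r : ℝ, r * (μn n one - 1) ≤ cn n := by
        intro r
        have := hsubc n (r • one)
        rw [map_smul, hconst r] at this
        simp only [smul_eq_mul] at this
        linarith
      by_contra h
      have hd : μn n one - 1 ≠ 0 := fun h' => h (by linarith [sub_eq_zero.1 h'])
      have := key ((cn n + 1)/(μn n one - 1))
      rw [div_mul_cancel₀ _ hd] at this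
      linarith
    set c : ℝ := C0 - E ((X : M) : Ω → ℝ) with hcdef
    have hcnle : ∀ n, cn n ≤ c := by
      intro n
      have h1 : 0 ≤ μn n (C0 • one - Xn n) := by
        apply hposn
        intro ω
        simp only [Submodule.coe_sub, Submodule.coe_smul, Pi.sub_apply, Pi.smul_apply,
          smul_eq_mul, hone', sub_nonneg]
        simpa using hup n ω
      rw [map_sub, map_smul] at h1
      simp only [smul_eq_mul, hone1 n, mul_one] at h1
      have h2 : E ((X : M) : Ω → ℝ) ≤ E ((Xn n : M) : Ω → ℝ) :=
        hmono _ X.2 _ (Xn n).2 (hXleX n)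
      rw [hcn, hcdef]
      simp only
      linarith
    have hsubU : ∀ n (Y : M), μn n Y - E (Y : Ω → ℝ) ≤ c :=
      fun n Y => (hsubc n Y).trans (hcnle n)
    obtain ⟨U, hU⟩ := Filter.exists_ultrafilter_le (atTop : Filter ℕ)
    have hbound : ∀ (Y : M) n,
        μn n Y ∈ Icc (-(E ((-Y : M) : Ω → ℝ) + c)) (E (Y : Ω → ℝ) + c) := by
      intro Y n
      constructor
      · have := hsubU n (-Y)
        rw [map_neg] at this
        linarith
      · linarith [hsubU n Y]
    have hlimU : ∀ Y : M, ∃ x, Tendsto (fun n => μn n Y) (U : Filter ℕ) (nhds x) := by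
      intro Y
      obtain ⟨x, -, hx⟩ := (isCompact_Icc
          (a := -(E ((-Y : M) : Ω → ℝ) + c)) (b := E (Y : Ω → ℝ) + c)).ultrafilter_le_nhds
        (U.map (fun n => μn n Y)) (by
          rw [Ultrafilter.coe_map, le_principal_iff, mem_map]
          exact Filter.univ_mem' (fun n => hbound Y n))
      exact ⟨x, hx⟩
    choose l hl using hlimU
    have hladd : ∀ Y Z : M, l (Y + Z) = l Y + l Z := fun Y Z =>
      tendsto_nhds_unique (hl (Y + Z))
        (((hl Y).add (hl Z)).congr (fun n => (map_add (μn n) Y Z).symm))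
    have hlsmul : ∀ (r : ℝ) (Y : M), l (r • Y) = r * l Y := fun r Y =>
      tendsto_nhds_unique (hl (r • Y))
        (((hl Y).const_mul r).congr (fun n => by rw [map_smul]; simp))
    set μL : M →ₗ[ℝ] ℝ :=
      { toFun := l
        map_add' := hladd
        map_smul' := by intro r Y; simp [hlsmul] } with hμL
    have hμLapp : ∀ Y : M, μL Y = l Y := fun Y => rfl
    have hμc : ∀ Y : M, μL Y - E (Y : Ω → ℝ) ≤ c := by
      intro Y
      have hle : l Y ≤ E (Y : Ω → ℝ) + c :=
        le_of_tendsto (hl Y) (Eventually.of_forall fun n => by linarith [hsubU n Y])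
      rw [hμLapp]
      linarith
    have htendμ : Tendsto (fun m => μL (Xn m)) atTop (nhds (μL X)) :=
      hμ μL ⟨c, hμc⟩ Xn X hanti hlim
    have hEanti : Antitone fun n => E ((Xn n : M) : Ω → ℝ) := by
      intro n m hnm
      exact hmono _ (Xn m).2 _ (Xn n).2 (fun ω => hanti ω hnm)
    have hEbdd : BddBelow (range fun n => E ((Xn n : M) : Ω → ℝ)) :=
      ⟨E ((X : M) : Ω → ℝ), by
        rintro x ⟨n, rfl⟩; exact hmono _ X.2 _ (Xn n).2 (hXleX n)⟩
    have htendE : Tendsto (fun n => E ((Xn n : M) : Ω → ℝ)) atTop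
        (nhds (⨅ n, E ((Xn n : M) : Ω → ℝ))) := tendsto_atTop_ciInf hEanti hEbdd
    set L := ⨅ n, E ((Xn n : M) : Ω → ℝ) with hLdef
    have hLge : E ((X : M) : Ω → ℝ) ≤ L :=
      le_ciInf fun n => hmono _ X.2 _ (Xn n).2 (hXleX n)
    have step : ∀ m, L ≤ l (Xn m) - l X + E ((X : M) : Ω → ℝ) := by
      intro m
      have hev : ∀ᶠ n in (U : Filter ℕ),
          L ≤ μn n (Xn m) - μn n X + E ((X : M) : Ω → ℝ) := by
        have hev0 : ∀ᶠ n in (U : Filter ℕ), m ≤ n := hU (eventually_ge_atTop m)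
        filter_upwards [hev0] with n hn
        have e1 : L ≤ E ((Xn n : M) : Ω → ℝ) := ciInf_le hEbdd n
        have e3 : μn n (Xn n) ≤ μn n (Xn m) := by
          have h1 : 0 ≤ μn n (Xn m - Xn n) := hposn n _ (by
            intro ω
            simp only [Submodule.coe_sub, Pi.sub_apply, sub_nonneg]
            exact hanti ω hn)
          rw [map_sub] at h1
          linarith
        have e4 := hsubc n X
        have e2 : E ((Xn n : M) : Ω → ℝ) = μn n (Xn n) - cn n := by
          rw [hcn]; ring
        linarith
      exact ge_of_tendsto (((hl (Xn m)).sub (hl X)).add_const _) hev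
    have hLleX : L ≤ E ((X : M) : Ω → ℝ) := by
      have ht2 : Tendsto (fun m => l (Xn m) - l X + E ((X : M) : Ω → ℝ)) atTop
          (nhds (l X - l X + E ((X : M) : Ω → ℝ))) := by
        have := (htendμ.sub_const (μL X)).add_const (E ((X : M) : Ω → ℝ))
        simpa [hμLapp] using this
      have := ge_of_tendsto ht2 (Eventually.of_forall step)
      simpa using this
    have hfinal : E ((X : M) : Ω → ℝ) = L := le_antisymm hLge hLleX
    rw [hfinal]
    exact htendE
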